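/- For every integer n ≥ 2 and every real γ ≥ 1, with x = ((1+γ)^(n-1)*(γ*(n-1) - 1) + 1)/(((1+γ)^(n-1) - 1)*((1+γ)^n - 1)), the inequality (γ*n/((1+γ)^n - 1)) * (x*((1+γ)^n - 1))^(1 - 1/n) ≥ (n/2) * x^(1 - 1/n) holds. -/
import Mathlib


theorem stmt_15 (n : ℕ) (hn : 2 ≤ n) (γ : ℝ) (hγ : 1 ≤ γ)
    (x : ℝ)
    (hx : x = ((1 + γ) ^ (n - 1) * (γ * ((n : ℝ) - 1) - 1) + 1)
        / (((1 + γ) ^ (n - 1) - 1) * ((1 + γ) ^ n - 1))) :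
    γ * n / ((1 + γ) ^ n - 1) * (x * ((1 + γ) ^ n - 1)) ^ ((1 : ℝ) - 1 / n)
      ≥ (n / 2) * x ^ ((1 : ℝ) - 1 / n) := by
  have hg2 : (2:ℝ) ≤ 1 + γ := by linarith
  have hn0 : (n:ℝ) ≠ 0 := by positivity
  have hnpos : (0:ℝ) < n := by positivity
  have h1lt : (1:ℝ) < (1 + γ) ^ n := one_lt_pow₀ (by linarith) (by omega)
  have h1lt' : (1:ℝ) < (1 + γ) ^ (n - 1) :=
    one_lt_pow₀ (by linarith) (by omega)
  set A : ℝ := (1 + γ) ^ n - 1 with hA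
  have hApos : 0 < A := by simp [hA]; linarith
  have hx0 : 0 ≤ x := by
    rw [hx]
    apply div_nonneg
    · have : (1:ℝ) ≤ γ * ((n:ℝ) - 1) := by
        have : (2:ℝ) ≤ (n:ℝ) := by exact_mod_cast hn
        nlinarith
      nlinarith [h1lt'.le]
    · apply mul_nonneg <;> linarith
  set e : ℝ := (1:ℝ) - 1 / n with he
  have he0 : 0 ≤ e := by
    have : (1:ℝ) ≤ (n:ℝ) := by exact_mod_cast Nat.one_le_of_lt hn
    rw [he]
    have : 1 / (n:ℝ) ≤ 1 := by
      rw [div_le_one hnpos]; linarith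
    linarith
  -- key: A^(1/n) ≤ 2γ
  have key : A ^ ((1:ℝ)/n) ≤ 2 * γ := by
    have h1 : A ^ ((1:ℝ)/n) ≤ ((1 + γ) ^ n) ^ ((1:ℝ)/n) := by
      apply Real.rpow_le_rpow hApos.le (by simp [hA]) (by positivity)
    have h2 : ((1 + γ) ^ n : ℝ) ^ ((1:ℝ)/n) = 1 + γ := by
      rw [← Real.rpow_natCast (1+γ) n, ← Real.rpow_mul (by linarith),
        mul_one_div, div_self hn0, Real.rpow_one]
    rw [h2] at h1
    linarith
  have hxA : (x * A) ^ e = x ^ e * A ^ e := Real.mul_rpow hx0 hApos.le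
  rw [ge_iff_le, hxA, div_mul_eq_mul_div (γ * (n:ℝ)) A, le_div_iff₀ hApos]
  have hAsplit : A = A ^ e * A ^ ((1:ℝ)/n) := by
    rw [← Real.rpow_add hApos, he]
    ring_nf
    rw [Real.rpow_one]
  calc (n:ℝ) / 2 * x ^ e * A = (n:ℝ) / 2 * x ^ e * (A ^ e * A ^ ((1:ℝ)/n)) := by
        rw [← hAsplit]
    _ ≤ (n:ℝ) / 2 * x ^ e * (A ^ e * (2 * γ)) := by
        have h1 : 0 ≤ x ^ e := Real.rpow_nonneg hx0 e
        have h2 : 0 ≤ A ^ e := Real.rpow_nonneg hApos.le e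
        have h3 : 0 ≤ (n:ℝ)/2 * x ^ e := by positivity
        exact mul_le_mul_of_nonneg_left (mul_le_mul_of_nonneg_left key h2) h3
    _ = γ * n * (x ^ e * A ^ e) := by ring
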